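/- If (X,T) is a transitive topological dynamical system that is not almost mean equicontinuous (i.e. the set of mean equicontinuity points is not residual), then (X,T) is mean sensitive. -/

import Mathlib

open Filter Metric Set
open scoped Classical

noncomputable def lowerDensity (S : Set ℕ) : ℝ :=
  Filter.atTop.liminf (fun n => (((Finset.range (n + 1)).filter (fun i => i ∈ S)).card : ℝ) / (n + 1))

noncomputable def upperDensity (S : Set ℕ) : ℝ :=
  Filter.atTop.limsup (fun n => (((Finset.range (n + 1)).filter (fun i => i ∈ S)).card : ℝ) / (n + 1))

noncomputable def dseq (S : Set ℕ) (n : ℕ) : ℝ :=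
  (((Finset.range (n + 1)).filter (fun i => i ∈ S)).card : ℝ) / (n + 1)

lemma upperDensity_eq (S : Set ℕ) : upperDensity S = Filter.atTop.limsup (dseq S) := rfl

lemma dseq_nonneg (S : Set ℕ) (n : ℕ) : 0 ≤ dseq S n := by
  unfold dseq; positivity

lemma dseq_le_one (S : Set ℕ) (n : ℕ) : dseq S n ≤ 1 := by
  rw [dseq, div_le_one (by positivity)]
  have h := Finset.card_filter_le (Finset.range (n + 1)) (fun i => i ∈ S)
  rw [Finset.card_range] at h
  exact_mod_cast h

lemma dseq_bdd (S : Set ℕ) : Filter.atTop.IsBoundedUnder (· ≤ ·) (dseq S) :=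
  ⟨1, Filter.eventually_map.2 (Eventually.of_forall (dseq_le_one S))⟩

lemma dseq_cobdd (S : Set ℕ) : Filter.atTop.IsCoboundedUnder (· ≤ ·) (dseq S) :=
  Filter.IsBoundedUnder.isCoboundedUnder_le
    ⟨0, Filter.eventually_map.2 (Eventually.of_forall (dseq_nonneg S))⟩

lemma ud_mono {S S' : Set ℕ} (h : S ⊆ S') : upperDensity S ≤ upperDensity S' := by
  rw [upperDensity_eq, upperDensity_eq]
  refine limsup_le_limsup (Eventually.of_forall fun n => ?_) (dseq_cobdd S) (dseq_bdd S')
  unfold dseq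
  gcongr

lemma ud_le_of_shift (S A : Set ℕ) (n : ℕ) (c : ℝ) (hA : upperDensity A ≤ c)
    (h : ∀ j ∈ S, j < n ∨ (n ≤ j ∧ j - n ∈ A)) : upperDensity S ≤ c := by
  have key : ∀ N : ℕ, dseq S N ≤ (n : ℝ) / (N + 1) + dseq A N := by
    intro N
    have hsub : (Finset.range (N + 1)).filter (fun i => i ∈ S) ⊆
        Finset.range n ∪ ((Finset.range (N + 1)).filter (fun i => i ∈ A)).image (· + n) := by
      intro i hi
      rw [Finset.mem_filter, Finset.mem_range] at hi
      rcases h i hi.2 with hlt | ⟨hge, hmem⟩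
      · exact Finset.mem_union_left _ (Finset.mem_range.2 hlt)
      · refine Finset.mem_union_right _ (Finset.mem_image.2 ⟨i - n, ?_, Nat.sub_add_cancel hge⟩)
        rw [Finset.mem_filter, Finset.mem_range]
        exact ⟨lt_of_le_of_lt (Nat.sub_le _ _) hi.1, hmem⟩
    have hcard : (((Finset.range (N + 1)).filter (fun i => i ∈ S)).card : ℝ) ≤
        (n : ℝ) + (((Finset.range (N + 1)).filter (fun i => i ∈ A)).card : ℝ) := by
      have := (Finset.card_le_card hsub).trans (Finset.card_union_le _ _)
      have h2 := Finset.card_image_le (s := (Finset.range (N + 1)).filter (fun i => i ∈ A))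
        (f := (· + n))
      rw [Finset.card_range] at this
      exact_mod_cast this.trans (Nat.add_le_add_left h2 n)
    rw [dseq, dseq, ← add_div, div_le_div_iff_of_pos_right (by positivity)]
    exact hcard
  rw [upperDensity_eq]
  refine le_of_forall_pos_le_add fun η hη => ?_
  have h1 : ∀ᶠ N in atTop, dseq A N < upperDensity A + η / 2 := by
    refine eventually_lt_of_limsup_lt ?_ (dseq_bdd A)
    rw [upperDensity_eq] at *
    linarith
  have h2 : ∀ᶠ (N : ℕ) in atTop, (n : ℝ) / ((N : ℝ) + 1) < η / 2 := by
    obtain ⟨N₀, hN₀⟩ := exists_nat_gt ((2 * n) / η : ℝ)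
    filter_upwards [eventually_ge_atTop N₀] with N hN
    have hNN : ((2 * n) / η : ℝ) < (N : ℝ) + 1 := by
      have : (N₀ : ℝ) ≤ N := by exact_mod_cast hN
      linarith
    rw [div_lt_iff₀ (by positivity)] at hNN ⊢
    nlinarith
  refine limsup_le_of_le (dseq_cobdd S) ?_
  filter_upwards [h1, h2] with N hN1 hN2
  calc dseq S N ≤ (n : ℝ) / (N + 1) + dseq A N := key N
    _ ≤ c + η := by linarith

/-- auxiliary open set of "mean-equicontinuity at scale c via pairs" -/
def Cset {X : Type*} [MetricSpace X] (T : X → X) (c : ℝ) : Set X :=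
  {x | ∃ δ > 0, ∀ y ∈ Metric.closedBall x δ, ∀ z ∈ Metric.closedBall x δ,
      upperDensity {i : ℕ | c < dist (T^[i] y) (T^[i] z)} ≤ c}

lemma Cset_open {X : Type*} [MetricSpace X] (T : X → X) (c : ℝ) : IsOpen (Cset T c) := by
  rw [Metric.isOpen_iff]
  rintro x ⟨δ, hδ, hx⟩
  refine ⟨δ / 2, by linarith, fun x' hx' => ?_⟩
  rw [Metric.mem_ball] at hx'
  refine ⟨δ / 2, by linarith, fun y hy z hz => ?_⟩
  have hmem : ∀ w : X, w ∈ Metric.closedBall x' (δ / 2) → w ∈ Metric.closedBall x δ := by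
    intro w hw
    rw [Metric.mem_closedBall] at hw ⊢
    calc dist w x ≤ dist w x' + dist x' x := dist_triangle _ _ _
      _ ≤ δ := by linarith
  exact hx y (hmem y hy) z (hmem z hz)

theorem transitive_not_almost_meanEq_meanSensitive {X : Type*} [MetricSpace X] [CompactSpace X]
    (T : X → X) (hT : Continuous T)
    (htrans : ∀ U V : Set X, IsOpen U → U.Nonempty → IsOpen V → V.Nonempty →
      ∃ i : ℕ, ((T^[i]) '' U ∩ V).Nonempty)
    (hnae : ¬ ({x : X | ∀ ε > 0, ∃ δ > 0, ∀ y ∈ Metric.closedBall x δ,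
        upperDensity {i : ℕ | ε < dist (T^[i] x) (T^[i] y)} < ε} ∈ residual X)) :
    ∃ ε > 0, ∀ U : Set X, IsOpen U → U.Nonempty → ∃ x ∈ U, ∃ y ∈ U,
      ε < upperDensity {i : ℕ | ε < dist (T^[i] x) (T^[i] y)} := by
  by_contra hcon
  push_neg at hcon
  apply hnae
  -- the scales
  set c : ℕ → ℝ := fun m => 1 / ((m : ℝ) + 2) with hc
  have hcpos : ∀ m, 0 < c m := fun m => by positivity
  -- each Cset T (c m) is dense
  have hdense : ∀ m : ℕ, Dense (Cset T (c m)) := by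
    intro m
    obtain ⟨U, hUopen, hUne, hU⟩ := hcon (c m) (hcpos m)
    rw [dense_iff_inter_open]
    intro V hVopen hVne
    obtain ⟨i, p, ⟨w, hwV, hwp⟩, hpU⟩ := htrans V U hVopen hVne hUopen hUne
    refine ⟨w, hwV, ?_⟩
    -- continuity of T^[i] at w
    have hcont : Continuous (T^[i]) := hT.iterate i
    have hnhds : T^[i] ⁻¹' U ∈ nhds w := by
      apply hcont.continuousAt.preimage_mem_nhds
      rw [hwp]
      exact hUopen.mem_nhds hpU
    obtain ⟨δ, hδ, hball⟩ := Metric.mem_nhds_iff.1 hnhds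
    refine ⟨δ / 2, by linarith, fun y hy z hz => ?_⟩
    have hyU : T^[i] y ∈ U := hball (by
      rw [Metric.mem_ball]; rw [Metric.mem_closedBall] at hy; linarith)
    have hzU : T^[i] z ∈ U := hball (by
      rw [Metric.mem_ball]; rw [Metric.mem_closedBall] at hz; linarith)
    have hA := hU (T^[i] y) hyU (T^[i] z) hzU
    refine ud_le_of_shift _ _ i _ hA ?_
    intro j hj
    by_cases hji : j < i
    · exact Or.inl hji
    · push_neg at hji
      refine Or.inr ⟨hji, ?_⟩
      have hrw : ∀ w : X, T^[j - i] (T^[i] w) = T^[j] w := by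
        intro w
        rw [← Function.iterate_add_apply, Nat.sub_add_cancel hji]
      show c m < dist (T^[j - i] (T^[i] y)) (T^[j - i] (T^[i] z))
      rw [hrw y, hrw z]
      exact hj
  -- residual membership
  rw [mem_residual_iff]
  refine ⟨Set.range (fun m : ℕ => Cset T (c m)), ?_, ?_, Set.countable_range _, ?_⟩
  · rintro t ⟨m, rfl⟩; exact Cset_open T (c m)
  · rintro t ⟨m, rfl⟩; exact hdense m
  · rw [Set.sInter_range]
    intro x hx
    rw [Set.mem_iInter] at hx
    intro ε hε
    obtain ⟨m, hm⟩ := exists_nat_gt (1 / ε)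
    have hcm : c m < ε := by
      rw [hc]
      rw [div_lt_iff₀ hε] at hm
      rw [div_lt_iff₀ (by positivity)]
      nlinarith [hε]
    obtain ⟨δ, hδ, hC⟩ := hx m
    refine ⟨δ, hδ, fun y hy => ?_⟩
    have h1 : upperDensity {i : ℕ | ε < dist (T^[i] x) (T^[i] y)} ≤
        upperDensity {i : ℕ | c m < dist (T^[i] x) (T^[i] y)} := by
      apply ud_mono
      intro i hi
      exact lt_trans hcm hi
    have h2 := hC x (Metric.mem_closedBall_self hδ.le) y hy
    exact lt_of_le_of_lt (h1.trans h2) hcm
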